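/- In the convolution algebra A_n, the linear span R of the set {e_t : t ∈ PT_n, t is not injective} is a two-sided ideal equal to the Jacobson radical of A_n; equivalently, R is a nilpotent two-sided ideal of A_n such that the quotient algebra A_n/R is semisimple. -/

import Mathlib

/-- The monoid of partial functions on `{1,…,n}`, modeled as `Fin n → Option (Fin n)`,
under composition of partial functions (right to left). -/
abbrev PT (n : ℕ) := Fin n → Option (Fin n)

namespace PT

variable {n : ℕ}

/-- Composition of partial functions, right to left: `comp s t = s ∘ t`. -/
def comp (s t : PT n) : PT n := fun x => (t x).bind s

/-- The domain of a partial function. -/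
def dom (t : PT n) : Finset (Fin n) := Finset.univ.filter fun x => (t x).isSome

/-- The image (range) of a partial function. -/
def ran (t : PT n) : Finset (Fin n) := Finset.univ.filter fun y => ∃ x, t x = some y

/-- The identity partial function on the subset `X`. -/
def idOn (X : Finset (Fin n)) : PT n := fun x => if x ∈ X then some x else none

instance : Monoid (PT n) where
  mul := comp
  one := fun x => some x
  mul_assoc s t w := by
    funext x
    show (w x).bind (fun z => (t z).bind s) = ((w x).bind t).bind s
    exact (Option.bind_assoc (w x) t s).symm
  one_mul t := by
    funext x
    show (t x).bind (fun y => some y) = t x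
    cases t x <;> rfl
  mul_one t := by
    funext x
    show (some x).bind t = t x
    rfl

end PT

namespace PT

variable {n : ℕ}

lemma mem_dom {t : PT n} {x : Fin n} : x ∈ dom t ↔ (t x).isSome := by simp [dom]

lemma mem_ran {t : PT n} {y : Fin n} : y ∈ ran t ↔ ∃ x, t x = some y := by simp [ran]

lemma comp_assoc (s t w : PT n) : comp (comp s t) w = comp s (comp t w) := mul_assoc s t w

lemma dom_comp {s t : PT n} (h : dom s = ran t) : dom (comp s t) = dom t := by
  ext x
  rw [mem_dom, mem_dom]
  show ((t x).bind s).isSome ↔ _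
  cases ht : t x with
  | none => simp
  | some a =>
    have ha : a ∈ dom s := by rw [h, mem_ran]; exact ⟨x, ht⟩
    rw [mem_dom] at ha
    simpa using ha
  

lemma ran_comp {t w : PT n} (h : dom t = ran w) : ran (comp t w) = ran t := by
  ext y
  rw [mem_ran, mem_ran]
  constructor
  · rintro ⟨x, hx⟩
    rcases Option.bind_eq_some_iff.mp hx with ⟨a, _, hta⟩
    exact ⟨a, hta⟩
  · rintro ⟨a, hta⟩
    have ha : a ∈ ran w := by
      rw [← h, mem_dom]
      simp [hta]
    rcases mem_ran.mp ha with ⟨x, hx⟩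
    exact ⟨x, by show (w x).bind t = some y; rw [hx]; exact hta⟩

lemma dom_idOn (X : Finset (Fin n)) : dom (idOn X) = X := by
  ext x
  rw [mem_dom, idOn]
  by_cases h : x ∈ X <;> simp [h]

lemma ran_idOn (X : Finset (Fin n)) : ran (idOn X) = X := by
  ext y
  rw [mem_ran]
  constructor
  · rintro ⟨x, hx⟩
    unfold idOn at hx
    split at hx
    · cases Option.some_injective _ hx; assumption
    · exact absurd hx (by simp)
  · intro hy
    exact ⟨y, by unfold idOn; rw [if_pos hy]⟩

lemma comp_idOn {s : PT n} : comp s (idOn (dom s)) = s := by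
  funext x
  show ((idOn (dom s)) x).bind s = s x
  unfold idOn
  by_cases h : x ∈ dom s
  · rw [if_pos h]; rfl
  · rw [if_neg h]
    rw [mem_dom] at h
    cases hs : s x with
    | none => rfl
    | some a => rw [hs] at h; simp at h

lemma idOn_comp {t : PT n} : comp (idOn (ran t)) t = t := by
  funext x
  show (t x).bind (idOn (ran t)) = t x
  cases ht : t x with
  | none => rfl
  | some a =>
    show idOn (ran t) a = some a
    unfold idOn
    rw [if_pos (mem_ran.mpr ⟨x, ht⟩)]

end PT

/-- The convolution algebra `A_n` of the epimorphism category: the vector space with basis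
`{e_t : t ∈ PT_n}` and multiplication `e_s · e_t = e_{s ∘ t}` if `dom s = im t`, else `0`. -/
noncomputable def PTAlg (n : ℕ) : Type := PT n →₀ ℂ

namespace PTAlg

variable {n : ℕ}

noncomputable instance : AddCommGroup (PTAlg n) := inferInstanceAs (AddCommGroup (PT n →₀ ℂ))
noncomputable instance : Module ℂ (PTAlg n) := inferInstanceAs (Module ℂ (PT n →₀ ℂ))

/-- The coefficient of `t` in an element of `A_n`. -/
noncomputable def coeff (a : PTAlg n) : PT n → ℂ := fun t => (show PT n →₀ ℂ from a) t

/-- The basis element `e_t` of `A_n`. -/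
noncomputable def e (t : PT n) : PTAlg n := show PT n →₀ ℂ from Finsupp.single t 1

/-- Convolution: `e_s · e_t = e_{s ∘ t}` if `dom s = im t`, and `0` otherwise. -/
noncomputable instance : Mul (PTAlg n) :=
  ⟨fun a b =>
    show PT n →₀ ℂ from
      Finsupp.equivFunOnFinite.symm fun u =>
        ∑ p : PT n × PT n,
          if PT.dom p.1 = PT.ran p.2 ∧ PT.comp p.1 p.2 = u then coeff a p.1 * coeff b p.2
          else 0⟩

/-- The multiplicative unit of `A_n` is `∑_{X ⊆ {1,…,n}} e_{id_X}`. -/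
noncomputable instance : One (PTAlg n) := ⟨∑ X : Finset (Fin n), e (PT.idOn X)⟩

end PTAlg

namespace PTAlg

variable {n : ℕ}

open PT

lemma ext' {a b : PTAlg n} (h : ∀ u, coeff a u = coeff b u) : a = b := Finsupp.ext h

lemma coeff_mul (a b : PTAlg n) (u : PT n) :
    coeff (a * b) u =
      ∑ p : PT n × PT n,
        if dom p.1 = ran p.2 ∧ comp p.1 p.2 = u then coeff a p.1 * coeff b p.2 else 0 :=
  Finsupp.equivFunOnFinite_symm_apply_apply _ _

lemma coeff_add (a b : PTAlg n) (u : PT n) : coeff (a + b) u = coeff a u + coeff b u := rfl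

lemma coeff_zero (u : PT n) : coeff (0 : PTAlg n) u = 0 := rfl

lemma coeff_smul (r : ℂ) (a : PTAlg n) (u : PT n) : coeff (r • a) u = r * coeff a u := rfl

lemma coeff_e (t u : PT n) : coeff (e t) u = if t = u then 1 else 0 := Finsupp.single_apply

lemma coeff_one (u : PT n) :
    coeff (1 : PTAlg n) u = if u = idOn (dom u) then 1 else 0 := by
  show coeff (∑ X : Finset (Fin n), e (idOn X)) u = _
  have : ∀ (l : Finset (Finset (Fin n))), coeff (∑ X ∈ l, e (idOn X)) u
      = ∑ X ∈ l, coeff (e (idOn X)) u := by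
    intro l
    induction l using Finset.induction_on with
    | empty => simp [coeff_zero]
    | insert _ _ hx ih => rw [Finset.sum_insert hx, Finset.sum_insert hx, coeff_add, ih]
  rw [this]
  by_cases h : u = idOn (dom u)
  · rw [if_pos h]
    rw [Finset.sum_eq_single (dom u)]
    · rw [coeff_e, if_pos h.symm]
    · intro X _ hX
      rw [coeff_e, if_neg]
      intro hc
      apply hX
      rw [← dom_idOn X, hc]
    · intro habs; exact absurd (Finset.mem_univ _) habs
  · rw [if_neg h]
    apply Finset.sum_eq_zero
    intro X _
    rw [coeff_e, if_neg]
    intro hc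
    apply h
    have : dom u = X := by rw [← hc, dom_idOn]
    rw [this, hc]

end PTAlg

namespace PTAlg

variable {n : ℕ}
open PT

lemma left_distrib' (a b c : PTAlg n) : a * (b + c) = a * b + a * c := by
  apply ext'; intro u
  rw [coeff_add, coeff_mul, coeff_mul, coeff_mul, ← Finset.sum_add_distrib]
  apply Finset.sum_congr rfl
  intro p _
  split_ifs with h
  · rw [coeff_add]; ring
  · rw [add_zero]

lemma right_distrib' (a b c : PTAlg n) : (a + b) * c = a * c + b * c := by
  apply ext'; intro u
  rw [coeff_add, coeff_mul, coeff_mul, coeff_mul, ← Finset.sum_add_distrib]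
  apply Finset.sum_congr rfl
  intro p _
  split_ifs with h
  · rw [coeff_add]; ring
  · rw [add_zero]

lemma zero_mul' (a : PTAlg n) : 0 * a = 0 := by
  apply ext'; intro u
  rw [coeff_mul, coeff_zero]
  apply Finset.sum_eq_zero
  intro p _
  split_ifs with h
  · rw [coeff_zero, zero_mul]
  · rfl

lemma mul_zero' (a : PTAlg n) : a * 0 = 0 := by
  apply ext'; intro u
  rw [coeff_mul, coeff_zero]
  apply Finset.sum_eq_zero
  intro p _
  split_ifs with h
  · rw [coeff_zero, mul_zero]
  · rfl

lemma mul_one' (a : PTAlg n) : a * 1 = a := by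
  apply ext'
  intro u
  rw [coeff_mul]
  rw [Finset.sum_eq_single ((u, idOn (dom u)) : PT n × PT n)]
  · rw [if_pos ⟨by rw [ran_idOn], comp_idOn⟩, coeff_one, if_pos (by rw [dom_idOn]), mul_one]
  · rintro ⟨s, t⟩ _ hne
    dsimp only at hne ⊢
    split_ifs with hcond
    · obtain ⟨h1, h2⟩ := hcond
      rw [coeff_one]
      split_ifs with ht
      · exfalso
        apply hne
        rw [ht, ran_idOn] at h1
        rw [ht, ← h1, comp_idOn] at h2
        subst h2
        rw [Prod.mk.injEq]
        refine ⟨rfl, ?_⟩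
        rw [ht, h1]
      · rw [mul_zero]
    · rfl
  · intro habs; exact absurd (Finset.mem_univ _) habs

lemma one_mul' (a : PTAlg n) : 1 * a = a := by
  apply ext'
  intro u
  rw [coeff_mul]
  rw [Finset.sum_eq_single ((idOn (ran u), u) : PT n × PT n)]
  · rw [if_pos ⟨by rw [dom_idOn], idOn_comp⟩, coeff_one, if_pos (by rw [dom_idOn]), one_mul]
  · rintro ⟨s, t⟩ _ hne
    dsimp only at hne ⊢
    split_ifs with hcond
    · obtain ⟨h1, h2⟩ := hcond
      rw [coeff_one]
      split_ifs with hs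
      · exfalso
        apply hne
        rw [hs, h1, idOn_comp] at h2
        subst h2
        rw [Prod.mk.injEq]
        refine ⟨?_, rfl⟩
        rw [hs, h1]
      · rw [zero_mul]
    · rfl
  · intro habs; exact absurd (Finset.mem_univ _) habs

end PTAlg

namespace PTAlg

variable {n : ℕ}
open PT

lemma key_left (a b c : PTAlg n) (u w : PT n) :
    (∑ q1 : PT n, if dom q1 = ran w ∧ comp q1 w = u then coeff (a * b) q1 * coeff c w else 0)
      = ∑ s : PT n, ∑ t : PT n,
          if dom s = ran t ∧ dom t = ran w ∧ comp (comp s t) w = u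
          then coeff a s * coeff b t * coeff c w else 0 := by
  have step : ∀ q1 : PT n,
      (if dom q1 = ran w ∧ comp q1 w = u then coeff (a * b) q1 * coeff c w else 0)
        = ∑ s : PT n, ∑ t : PT n,
            if (dom s = ran t ∧ comp s t = q1) ∧ (dom q1 = ran w ∧ comp q1 w = u)
            then coeff a s * coeff b t * coeff c w else 0 := by
    intro q1
    by_cases h : dom q1 = ran w ∧ comp q1 w = u
    · rw [if_pos h, coeff_mul, Fintype.sum_prod_type, Finset.sum_mul]
      apply Finset.sum_congr rfl
      intro s _
      rw [Finset.sum_mul]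
      apply Finset.sum_congr rfl
      intro t _
      rw [ite_mul, zero_mul]
      by_cases h2 : dom s = ran t ∧ comp s t = q1
      · rw [if_pos h2, if_pos ⟨h2, h⟩]
      · rw [if_neg h2, if_neg (fun hc => h2 hc.1)]
    · rw [if_neg h]
      symm
      apply Finset.sum_eq_zero; intro s _
      apply Finset.sum_eq_zero; intro t _
      exact if_neg (fun hc => h hc.2)
  rw [Finset.sum_congr rfl (fun q1 _ => step q1), Finset.sum_comm]
  apply Finset.sum_congr rfl
  intro s _
  rw [Finset.sum_comm]
  apply Finset.sum_congr rfl
  intro t _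
  rw [Finset.sum_eq_single (comp s t)]
  · apply if_congr _ rfl rfl
    constructor
    · rintro ⟨⟨h1, -⟩, h2, h3⟩
      exact ⟨h1, by rw [← dom_comp h1]; exact h2, h3⟩
    · rintro ⟨h1, h2, h3⟩
      exact ⟨⟨h1, rfl⟩, by rw [dom_comp h1]; exact h2, h3⟩
  · intro q1 _ hne
    apply if_neg
    rintro ⟨⟨-, hq⟩, -⟩
    exact hne hq.symm
  · intro habs; exact absurd (Finset.mem_univ _) habs

lemma key_right (a b c : PTAlg n) (u s : PT n) :
    (∑ q2 : PT n, if dom s = ran q2 ∧ comp s q2 = u then coeff a s * coeff (b * c) q2 else 0)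
      = ∑ t : PT n, ∑ w : PT n,
          if dom s = ran t ∧ dom t = ran w ∧ comp (comp s t) w = u
          then coeff a s * coeff b t * coeff c w else 0 := by
  have step : ∀ q2 : PT n,
      (if dom s = ran q2 ∧ comp s q2 = u then coeff a s * coeff (b * c) q2 else 0)
        = ∑ t : PT n, ∑ w : PT n,
            if (dom t = ran w ∧ comp t w = q2) ∧ (dom s = ran q2 ∧ comp s q2 = u)
            then coeff a s * coeff b t * coeff c w else 0 := by
    intro q2
    by_cases h : dom s = ran q2 ∧ comp s q2 = u
    · rw [if_pos h, coeff_mul, Fintype.sum_prod_type, Finset.mul_sum]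
      apply Finset.sum_congr rfl
      intro t _
      rw [Finset.mul_sum]
      apply Finset.sum_congr rfl
      intro w _
      rw [mul_ite, mul_zero]
      by_cases h2 : dom t = ran w ∧ comp t w = q2
      · rw [if_pos h2, if_pos ⟨h2, h⟩, mul_assoc]
      · rw [if_neg h2, if_neg (fun hc => h2 hc.1)]
    · rw [if_neg h]
      symm
      apply Finset.sum_eq_zero; intro t _
      apply Finset.sum_eq_zero; intro w _
      exact if_neg (fun hc => h hc.2)
  rw [Finset.sum_congr rfl (fun q2 _ => step q2), Finset.sum_comm]
  apply Finset.sum_congr rfl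
  intro t _
  rw [Finset.sum_comm]
  apply Finset.sum_congr rfl
  intro w _
  rw [Finset.sum_eq_single (comp t w)]
  · apply if_congr _ rfl rfl
    constructor
    · rintro ⟨⟨h1, -⟩, h2, h3⟩
      refine ⟨by rw [← ran_comp h1]; exact h2, h1, ?_⟩
      rw [comp_assoc]; exact h3
    · rintro ⟨h1, h2, h3⟩
      exact ⟨⟨h2, rfl⟩, by rw [ran_comp h2]; exact h1, by rw [← comp_assoc]; exact h3⟩
  · intro q2 _ hne
    apply if_neg
    rintro ⟨⟨-, hq⟩, -⟩
    exact hne hq.symm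
  · intro habs; exact absurd (Finset.mem_univ _) habs

lemma coeff_mul_mul (a b c : PTAlg n) (u : PT n) :
    coeff (a * b * c) u =
      ∑ s : PT n, ∑ t : PT n, ∑ w : PT n,
        if dom s = ran t ∧ dom t = ran w ∧ comp (comp s t) w = u
        then coeff a s * coeff b t * coeff c w else 0 := by
  rw [coeff_mul, Fintype.sum_prod_type, Finset.sum_comm]
  calc (∑ w : PT n, ∑ q1 : PT n,
          if dom q1 = ran w ∧ comp q1 w = u then coeff (a * b) q1 * coeff c w else 0)
      = ∑ w : PT n, ∑ s : PT n, ∑ t : PT n,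
          if dom s = ran t ∧ dom t = ran w ∧ comp (comp s t) w = u
          then coeff a s * coeff b t * coeff c w else 0 :=
        Finset.sum_congr rfl fun w _ => key_left a b c u w
    _ = ∑ s : PT n, ∑ w : PT n, ∑ t : PT n,
          if dom s = ran t ∧ dom t = ran w ∧ comp (comp s t) w = u
          then coeff a s * coeff b t * coeff c w else 0 := Finset.sum_comm
    _ = ∑ s : PT n, ∑ t : PT n, ∑ w : PT n,
          if dom s = ran t ∧ dom t = ran w ∧ comp (comp s t) w = u
          then coeff a s * coeff b t * coeff c w else 0 :=
        Finset.sum_congr rfl fun s _ => Finset.sum_comm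

lemma coeff_mul_mul' (a b c : PTAlg n) (u : PT n) :
    coeff (a * (b * c)) u =
      ∑ s : PT n, ∑ t : PT n, ∑ w : PT n,
        if dom s = ran t ∧ dom t = ran w ∧ comp (comp s t) w = u
        then coeff a s * coeff b t * coeff c w else 0 := by
  rw [coeff_mul, Fintype.sum_prod_type]
  exact Finset.sum_congr rfl fun s _ => key_right a b c u s

lemma mul_assoc' (a b c : PTAlg n) : a * b * c = a * (b * c) :=
  ext' fun u => (coeff_mul_mul a b c u).trans (coeff_mul_mul' a b c u).symm

noncomputable instance : Ring (PTAlg n) :=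
  { (inferInstance : AddCommGroup (PTAlg n)) with
    mul := (· * ·)
    one := 1
    mul_assoc := mul_assoc'
    one_mul := one_mul'
    mul_one := mul_one'
    left_distrib := left_distrib'
    right_distrib := right_distrib'
    zero_mul := zero_mul'
    mul_zero := mul_zero' }

noncomputable instance : Algebra ℂ (PTAlg n) :=
  Algebra.ofModule
    (fun r x y => by
      apply ext'; intro u
      rw [coeff_smul, coeff_mul, coeff_mul, Finset.mul_sum]
      apply Finset.sum_congr rfl
      intro p _
      split_ifs with h
      · rw [coeff_smul]; ring
      · rw [mul_zero])
    (fun r x y => by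
      apply ext'; intro u
      rw [coeff_smul, coeff_mul, coeff_mul, Finset.mul_sum]
      apply Finset.sum_congr rfl
      intro p _
      split_ifs with h
      · rw [coeff_smul]; ring
      · rw [mul_zero])

end PTAlg

namespace PT

/-- A partial function is injective (on its domain). -/
def Inj {n : ℕ} (t : PT n) : Prop := ∀ x y z, t x = some z → t y = some z → x = y

end PT

namespace PT

variable {n : ℕ}

instance (t : PT n) : Decidable (Inj t) :=
  decidable_of_iff (∀ x y z, t x = some z → t y = some z → x = y) Iff.rfl

lemma inj_idOn (X : Finset (Fin n)) : Inj (idOn X) := by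
  intro x y z hx hy
  unfold idOn at hx hy
  by_cases h1 : x ∈ X
  · by_cases h2 : y ∈ X
    · rw [if_pos h1] at hx; rw [if_pos h2] at hy
      exact (Option.some_inj.mp hx).trans (Option.some_inj.mp hy).symm
    · rw [if_neg h2] at hy; cases hy
  · rw [if_neg h1] at hx; cases hx

lemma card_dom_le (t : PT n) : (dom t).card ≤ n :=
  le_trans (Finset.card_le_univ _) (by simp)

/-- auxiliary total function extracted from a partial function -/
def fval (t : PT n) : Fin n → Fin n := fun x => (t x).getD x

lemma fval_mem_ran {t : PT n} {x : Fin n} (hx : x ∈ dom t) : fval t x ∈ ran t := by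
  rw [mem_dom] at hx
  obtain ⟨z, hz⟩ := Option.isSome_iff_exists.mp hx
  refine mem_ran.mpr ⟨x, ?_⟩
  simp [fval, hz]

lemma ran_subset_image (t : PT n) : ran t ⊆ (dom t).image (fval t) := by
  intro y hy
  obtain ⟨x, hx⟩ := mem_ran.mp hy
  exact Finset.mem_image.mpr ⟨x, mem_dom.mpr (by simp [hx]), by simp [fval, hx]⟩

lemma card_ran_le (t : PT n) : (ran t).card ≤ (dom t).card :=
  le_trans (Finset.card_le_card (ran_subset_image t)) Finset.card_image_le

lemma card_ran_of_inj {t : PT n} (ht : Inj t) : (ran t).card = (dom t).card := by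
  have himg : (dom t).image (fval t) = ran t := by
    apply Finset.Subset.antisymm
    · intro y hy
      obtain ⟨x, hx, rfl⟩ := Finset.mem_image.mp hy
      exact fval_mem_ran hx
    · exact ran_subset_image t
  rw [← himg]
  apply Finset.card_image_of_injOn
  intro a ha b hb hab
  obtain ⟨za, hza⟩ := Option.isSome_iff_exists.mp (mem_dom.mp ha)
  obtain ⟨zb, hzb⟩ := Option.isSome_iff_exists.mp (mem_dom.mp hb)
  have h1 : fval t a = za := by simp [fval, hza]
  have h2 : fval t b = zb := by simp [fval, hzb]
  exact ht a b za hza (by rw [hzb]; congr 1; rw [← h1, ← h2, hab])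

lemma card_ran_lt_of_not_inj {t : PT n} (ht : ¬ Inj t) : (ran t).card + 1 ≤ (dom t).card := by
  simp only [Inj, not_forall] at ht
  obtain ⟨x, y, z, hx, hy, hxy⟩ := ht
  have hsub : ran t ⊆ ((dom t).erase y).image (fval t) := by
    intro w hw
    obtain ⟨a, ha⟩ := mem_ran.mp hw
    by_cases hay : a = y
    · subst hay
      have hwz : w = z := by rw [hy] at ha; exact (Option.some_inj.mp ha).symm
      refine Finset.mem_image.mpr ⟨x, Finset.mem_erase.mpr ⟨hxy, mem_dom.mpr (by simp [hx])⟩, ?_⟩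
      simp [fval, hx, hwz]
    · exact Finset.mem_image.mpr
        ⟨a, Finset.mem_erase.mpr ⟨hay, mem_dom.mpr (by simp [ha])⟩, by simp [fval, ha]⟩
  have h1 := le_trans (Finset.card_le_card hsub) Finset.card_image_le
  have h2 : ((dom t).erase y).card = (dom t).card - 1 :=
    Finset.card_erase_of_mem (mem_dom.mpr (by simp [hy]))
  have h3 : 1 ≤ (dom t).card := Finset.card_pos.mpr ⟨y, mem_dom.mpr (by simp [hy])⟩
  omega

lemma inj_comp {s t : PT n} (hs : Inj s) (ht : Inj t) : Inj (comp s t) := by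
  intro x y z hx hy
  obtain ⟨a, ha, ha'⟩ := Option.bind_eq_some_iff.mp hx
  obtain ⟨b, hb, hb'⟩ := Option.bind_eq_some_iff.mp hy
  have hab : a = b := hs a b z ha' hb'
  exact ht x y a ha (hab ▸ hb)

lemma inj_of_comp_right {s t : PT n} (h : dom s = ran t) (hc : Inj (comp s t)) : Inj t := by
  intro x y z hx hy
  have hz : z ∈ dom s := h ▸ mem_ran.mpr ⟨x, hx⟩
  obtain ⟨w, hw⟩ := Option.isSome_iff_exists.mp (mem_dom.mp hz)
  exact hc x y w (by show (t x).bind s = some w; rw [hx]; exact hw)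
    (by show (t y).bind s = some w; rw [hy]; exact hw)

lemma inj_of_comp_left {s t : PT n} (h : dom t = ran s) (hc : Inj (comp t s)) : Inj t := by
  intro x y z hx hy
  obtain ⟨x', hx'⟩ := mem_ran.mp (show x ∈ ran s from h ▸ mem_dom.mpr (by simp [hx]))
  obtain ⟨y', hy'⟩ := mem_ran.mp (show y ∈ ran s from h ▸ mem_dom.mpr (by simp [hy]))
  have hxy' : x' = y' := hc x' y' z (by show (s x').bind t = some z; rw [hx']; exact hx)
    (by show (s y').bind t = some z; rw [hy']; exact hy)
  exact Option.some_inj.mp (hx'.symm.trans (hxy' ▸ hy'))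

lemma idOn_comp_of_subset {t : PT n} {X : Finset (Fin n)} (h : ran t ⊆ X) :
    comp (idOn X) t = t := by
  funext x
  show (t x).bind (idOn X) = t x
  cases hx : t x with
  | none => rfl
  | some y =>
    show idOn X y = some y
    unfold idOn
    rw [if_pos (h (mem_ran.mpr ⟨x, hx⟩))]

lemma comp_idOn_of_subset {t : PT n} {X : Finset (Fin n)} (h : dom t ⊆ X) :
    comp t (idOn X) = t := by
  funext x
  show (idOn X x).bind t = t x
  unfold idOn
  by_cases hx : x ∈ X
  · rw [if_pos hx]; rfl
  · rw [if_neg hx]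
    cases ht : t x with
    | none => rfl
    | some y => exact absurd (h (mem_dom.mpr (by simp [ht]))) hx

/-- The inverse of a partial injection (junk values if not injective). -/
noncomputable def invx (t : PT n) : PT n := fun y =>
  if h : ∃ x, t x = some y then some h.choose else none

lemma invx_eq_some {t : PT n} (ht : Inj t) {x y : Fin n} (h : t x = some y) :
    invx t y = some x := by
  have hex : ∃ a, t a = some y := ⟨x, h⟩
  unfold invx
  rw [dif_pos hex]
  exact congrArg some (ht _ _ _ hex.choose_spec h)

lemma dom_invx (t : PT n) : dom (invx t) = ran t := by
  ext y
  rw [mem_dom, mem_ran]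
  unfold invx
  by_cases h : ∃ x, t x = some y
  · rw [dif_pos h]; simpa using h
  · rw [dif_neg h]; simpa using h

lemma ran_invx {t : PT n} (ht : Inj t) : ran (invx t) = dom t := by
  ext x
  rw [mem_ran, mem_dom]
  constructor
  · rintro ⟨y, hy⟩
    unfold invx at hy
    split at hy
    · rename_i h
      have hc := h.choose_spec
      rw [Option.some_inj.mp hy] at hc
      simp [hc]
    · cases hy
  · intro hx
    obtain ⟨z, hz⟩ := Option.isSome_iff_exists.mp hx
    exact ⟨z, invx_eq_some ht hz⟩

lemma inj_invx (t : PT n) : Inj (invx t) := by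
  intro x y z hx hy
  unfold invx at hx hy
  split at hx
  · rename_i h1
    split at hy
    · rename_i h2
      have e1 : t z = some x := by rw [← Option.some_inj.mp hx]; exact h1.choose_spec
      have e2 : t z = some y := by rw [← Option.some_inj.mp hy]; exact h2.choose_spec
      exact Option.some_inj.mp (e1.symm.trans e2)
    · cases hy
  · cases hx

lemma invx_comp_self {t : PT n} (ht : Inj t) : comp (invx t) t = idOn (dom t) := by
  funext x
  show (t x).bind (invx t) = idOn (dom t) x
  unfold idOn
  cases h : t x with
  | none => rw [if_neg (by rw [mem_dom]; simp [h])]; rfl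
  | some y => rw [if_pos (mem_dom.mpr (by simp [h]))]; exact invx_eq_some ht h

lemma self_comp_invx (t : PT n) : comp t (invx t) = idOn (ran t) := by
  funext y
  show (invx t y).bind t = idOn (ran t) y
  unfold invx idOn
  by_cases h : ∃ x, t x = some y
  · rw [dif_pos h, if_pos (mem_ran.mpr h)]; exact h.choose_spec
  · rw [dif_neg h, if_neg (fun hc => h (mem_ran.mp hc))]; rfl

lemma eq_invx {t u : PT n} (ht : Inj t) (hdom : dom u = ran t)
    (hcomp : comp t u = idOn (ran t)) : u = invx t := by
  have hsub : ran u ⊆ dom t := by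
    intro y hy
    obtain ⟨x, hx⟩ := mem_ran.mp hy
    have hxr : x ∈ ran t := hdom ▸ mem_dom.mpr (by simp [hx])
    have hcx : comp t u x = idOn (ran t) x := congrFun hcomp x
    have h2 : (u x).bind t = idOn (ran t) x := hcx
    rw [hx] at h2
    unfold idOn at h2
    rw [if_pos hxr] at h2
    simp only [Option.bind_some] at h2
    exact mem_dom.mpr (by simp [h2])
  calc u = comp (idOn (dom t)) u := (idOn_comp_of_subset hsub).symm
    _ = comp (comp (invx t) t) u := by rw [invx_comp_self ht]
    _ = comp (invx t) (comp t u) := comp_assoc _ _ _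
    _ = comp (invx t) (idOn (ran t)) := by rw [hcomp]
    _ = invx t := comp_idOn_of_subset (by rw [dom_invx])

lemma comp_invx_comp {s t : PT n} (hs : Inj s) (ht : Inj t) (h : dom t = ran s) :
    comp s (invx (comp t s)) = invx t := by
  have hts : Inj (comp t s) := inj_comp ht hs
  apply eq_invx ht
  · have h1 : dom s = ran (invx (comp t s)) := by rw [ran_invx hts, dom_comp h]
    rw [dom_comp h1, dom_invx, ran_comp h]
  · calc comp t (comp s (invx (comp t s)))
        = comp (comp t s) (invx (comp t s)) := (comp_assoc _ _ _).symm
      _ = idOn (ran (comp t s)) := self_comp_invx _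
      _ = idOn (ran t) := by rw [ran_comp h]

/-- a partial bijection with range `X` and domain `Y`, given `X.card = Y.card` -/
def transMap (X Y : Finset (Fin n)) (h : X.card = Y.card) : PT n := fun a =>
  if ha : a ∈ Y then some ↑(X.orderIsoOfFin h ((Y.orderIsoOfFin rfl).symm ⟨a, ha⟩)) else none

lemma dom_transMap (X Y : Finset (Fin n)) (h : X.card = Y.card) : dom (transMap X Y h) = Y := by
  ext a
  rw [mem_dom]
  unfold transMap
  by_cases ha : a ∈ Y
  · rw [dif_pos ha]; simpa using ha
  · rw [dif_neg ha]; simpa using ha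

lemma ran_transMap (X Y : Finset (Fin n)) (h : X.card = Y.card) : ran (transMap X Y h) = X := by
  ext b
  rw [mem_ran]
  constructor
  · rintro ⟨a, ha⟩
    unfold transMap at ha
    split at ha
    · rw [← Option.some_inj.mp ha]; exact Finset.coe_mem _
    · cases ha
  · intro hb
    refine ⟨↑(Y.orderIsoOfFin rfl ((X.orderIsoOfFin h).symm ⟨b, hb⟩)), ?_⟩
    unfold transMap
    rw [dif_pos (Finset.coe_mem _)]
    congr 1
    have h1 : (⟨↑(Y.orderIsoOfFin rfl ((X.orderIsoOfFin h).symm ⟨b, hb⟩)), Finset.coe_mem _⟩ :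
        {x // x ∈ Y}) = Y.orderIsoOfFin rfl ((X.orderIsoOfFin h).symm ⟨b, hb⟩) :=
      Subtype.ext rfl
    rw [h1, OrderIso.symm_apply_apply, OrderIso.apply_symm_apply]

lemma inj_transMap (X Y : Finset (Fin n)) (h : X.card = Y.card) : Inj (transMap X Y h) := by
  intro a b z ha hb
  unfold transMap at ha hb
  split at ha
  · rename_i ha'
    split at hb
    · rename_i hb'
      have e1 := Option.some_inj.mp ha
      have e2 := Option.some_inj.mp hb
      have e3 : X.orderIsoOfFin h ((Y.orderIsoOfFin rfl).symm ⟨a, ha'⟩)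
          = X.orderIsoOfFin h ((Y.orderIsoOfFin rfl).symm ⟨b, hb'⟩) :=
        Subtype.coe_injective (e1.trans e2.symm)
      have e4 := (EquivLike.injective (Y.orderIsoOfFin rfl).symm)
        (EquivLike.injective (X.orderIsoOfFin h) e3)
      exact congrArg Subtype.val e4
    · cases hb
  · cases ha

/-- the number of partial injections with domain `X` -/
def Ninj (X : Finset (Fin n)) : ℕ :=
  (Finset.univ.filter fun t : PT n => Inj t ∧ dom t = X).card

lemma Ninj_pos (X : Finset (Fin n)) : 0 < Ninj X :=
  Finset.card_pos.mpr ⟨idOn X, Finset.mem_filter.mpr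
    ⟨Finset.mem_univ _, inj_idOn X, dom_idOn X⟩⟩

lemma Ninj_eq {X Y : Finset (Fin n)} (h : X.card = Y.card) : Ninj X = Ninj Y := by
  set g : PT n := transMap X Y h with hg
  have hdg : dom g = Y := dom_transMap X Y h
  have hrg : ran g = X := ran_transMap X Y h
  have hig : Inj g := inj_transMap X Y h
  apply Finset.card_nbij' (i := fun t => comp t g) (j := fun t => comp t (invx g))
  · intro t htm
    obtain ⟨-, hti, htd⟩ := Finset.mem_filter.mp htm
    refine Finset.mem_filter.mpr ⟨Finset.mem_univ _, inj_comp hti hig, ?_⟩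
    rw [dom_comp (by rw [hrg, htd]), hdg]
  · intro t htm
    obtain ⟨-, hti, htd⟩ := Finset.mem_filter.mp htm
    refine Finset.mem_filter.mpr ⟨Finset.mem_univ _, inj_comp hti (inj_invx g), ?_⟩
    rw [dom_comp (by rw [ran_invx hig, hdg, htd]), dom_invx, hrg]
  · intro t htm
    obtain ⟨-, hti, htd⟩ := Finset.mem_filter.mp htm
    show comp (comp t g) (invx g) = t
    rw [comp_assoc, self_comp_invx, hrg, comp_idOn_of_subset (by rw [htd])]
  · intro t htm
    obtain ⟨-, hti, htd⟩ := Finset.mem_filter.mp htm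
    show comp (comp t (invx g)) g = t
    rw [comp_assoc, invx_comp_self hig, hdg, comp_idOn_of_subset (by rw [htd])]

end PT
namespace PTAlg

variable {n : ℕ}
open PT

lemma coeff_sum {ι : Type*} [DecidableEq ι] (s : Finset ι) (f : ι → PTAlg n) (u : PT n) :
    coeff (∑ i ∈ s, f i) u = ∑ i ∈ s, coeff (f i) u := by
  induction s using Finset.induction_on with
  | empty => simp [coeff_zero]
  | insert _ _ hx ih =>
    rename_i a s'
    rw [Finset.sum_insert hx, Finset.sum_insert hx, coeff_add, ih]

lemma repr (a : PTAlg n) : a = ∑ t : PT n, coeff a t • e t := by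
  apply ext'
  intro u
  rw [coeff_sum]
  have h1 : ∀ t : PT n, coeff (coeff a t • e t) u = if t = u then coeff a t else 0 := by
    intro t
    rw [coeff_smul, coeff_e]
    split_ifs <;> ring
  rw [Finset.sum_congr rfl fun t _ => h1 t]
  rw [Finset.sum_ite_eq' Finset.univ u (fun t => coeff a t), if_pos (Finset.mem_univ _)]

lemma e_mul_e (s t : PT n) :
    e s * e t = if dom s = ran t then e (comp s t) else 0 := by
  apply ext'
  intro u
  rw [coeff_mul]
  rw [Finset.sum_eq_single ((s, t) : PT n × PT n)]
  · rw [coeff_e, coeff_e, if_pos rfl, if_pos rfl]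
    by_cases h : dom s = ran t
    · rw [if_pos h]
      by_cases h2 : comp s t = u
      · rw [if_pos ⟨h, h2⟩, coeff_e, if_pos h2]; ring
      · rw [if_neg (fun hc => h2 hc.2), coeff_e, if_neg h2]
    · rw [if_neg (fun hc => h hc.1), if_neg h, coeff_zero]
  · rintro ⟨s', t'⟩ - hne
    split_ifs with hc
    · rw [coeff_e, coeff_e]
      by_cases h1 : s = s'
      · by_cases h2 : t = t'
        · subst h1; subst h2; exact absurd rfl hne
        · rw [if_neg h2, mul_zero]
      · rw [if_neg h1, zero_mul]
    · rfl
  · intro h; exact absurd (Finset.mem_univ _) h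

end PTAlg

open PT PTAlg

variable {n : ℕ}

/-- the spanning set of the radical -/
def Sset (n : ℕ) : Set (PTAlg n) := {x | ∃ t : PT n, ¬ Inj t ∧ x = e t}

/-- the radical candidate -/
noncomputable def Rsub (n : ℕ) : Submodule ℂ (PTAlg n) := Submodule.span ℂ (Sset n)

lemma mul_e_mem (a : PTAlg n) {t : PT n} (ht : ¬ Inj t) : a * e t ∈ Rsub n := by
  have h1 : a * e t = ∑ s : PT n, coeff a s • (e s * e t) := by
    conv_lhs => rw [repr a]
    rw [Finset.sum_mul]
    exact Finset.sum_congr rfl fun s _ => smul_mul_assoc _ _ _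
  rw [h1]
  apply Submodule.sum_mem
  intro s _
  apply Submodule.smul_mem
  rw [e_mul_e]
  split_ifs with h
  · exact Submodule.subset_span ⟨comp s t, fun hc => ht (inj_of_comp_right h hc), rfl⟩
  · exact zero_mem _

lemma e_mul_mem (a : PTAlg n) {t : PT n} (ht : ¬ Inj t) : e t * a ∈ Rsub n := by
  have h1 : e t * a = ∑ s : PT n, coeff a s • (e t * e s) := by
    conv_lhs => rw [repr a]
    rw [Finset.mul_sum]
    exact Finset.sum_congr rfl fun s _ => (mul_smul_comm _ _ _)
  rw [h1]
  apply Submodule.sum_mem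
  intro s _
  apply Submodule.smul_mem
  rw [e_mul_e]
  split_ifs with h
  · exact Submodule.subset_span ⟨comp t s, fun hc => ht (inj_of_comp_left h hc), rfl⟩
  · exact zero_mem _

lemma mul_mem_Rsub (a : PTAlg n) {r : PTAlg n} (hr : r ∈ Rsub n) : a * r ∈ Rsub n := by
  induction hr using Submodule.span_induction with
  | mem x hx => obtain ⟨t, ht, rfl⟩ := hx; exact mul_e_mem a ht
  | zero => rw [mul_zero]; exact zero_mem _
  | add x y hx hy ihx ihy => rw [mul_add]; exact add_mem ihx ihy
  | smul c x hx ih => rw [mul_smul_comm]; exact Submodule.smul_mem _ _ ih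

lemma mem_mul_Rsub (a : PTAlg n) {r : PTAlg n} (hr : r ∈ Rsub n) : r * a ∈ Rsub n := by
  induction hr using Submodule.span_induction with
  | mem x hx => obtain ⟨t, ht, rfl⟩ := hx; exact e_mul_mem a ht
  | zero => rw [zero_mul]; exact zero_mem _
  | add x y hx hy ihx ihy => rw [add_mul]; exact add_mem ihx ihy
  | smul c x hx ih => rw [smul_mul_assoc]; exact Submodule.smul_mem _ _ ih

/-- filtration submodules for the nilpotency proof -/
noncomputable def Vm (n m : ℕ) : Submodule ℂ (PTAlg n) :=
  Submodule.span ℂ {x | ∃ t : PT n, ¬ Inj t ∧ (ran t).card + m ≤ n ∧ x = e t}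

lemma R_le_V1 : Rsub n ≤ Vm n 1 := by
  rw [Rsub, Submodule.span_le]
  rintro x ⟨t, ht, rfl⟩
  refine Submodule.subset_span ⟨t, ht, ?_, rfl⟩
  have h1 := card_ran_lt_of_not_inj ht
  have h2 := card_dom_le t
  omega

lemma R_mul_V_le (m : ℕ) : Rsub n * Vm n m ≤ Vm n (m + 1) := by
  rw [Rsub, Vm, Submodule.span_mul_span, Submodule.span_le]
  rintro x hx
  obtain ⟨y, hy, z, hz, rfl⟩ := Set.mem_mul.mp hx
  obtain ⟨s, hs, rfl⟩ := hy
  obtain ⟨t, ht, hcard, rfl⟩ := hz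
  rw [SetLike.mem_coe, e_mul_e]
  split_ifs with h
  · refine Submodule.subset_span ⟨comp s t, fun hc => hs (inj_of_comp_left h hc), ?_, rfl⟩
    rw [ran_comp h]
    have h1 := card_ran_lt_of_not_inj hs
    rw [h] at h1
    omega
  · exact zero_mem _

lemma Rpow_le_V (m : ℕ) : Rsub n ^ (m + 1) ≤ Vm n (m + 1) := by
  induction m with
  | zero => rw [pow_one]; exact R_le_V1
  | succ m ih =>
    rw [pow_succ']
    exact le_trans (mul_le_mul' le_rfl ih) (R_mul_V_le (m + 1))

lemma Rpow_eq_bot : Rsub n ^ (n + 1) = ⊥ := by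
  rw [eq_bot_iff]
  refine le_trans (Rpow_le_V n) ?_
  rw [Vm, Submodule.span_le]
  rintro x ⟨t, ht, hcard, rfl⟩
  exact absurd hcard (by omega)

lemma mem_Rsub_iff_mem_span {x : PTAlg n} :
    x ∈ Rsub n ↔ x ∈ TwoSidedIdeal.span (Sset n) := by
  constructor
  · intro hx
    induction hx using Submodule.span_induction with
    | mem y hy => exact TwoSidedIdeal.subset_span hy
    | zero => exact zero_mem _
    | add y z hy hz ihy ihz => exact add_mem ihy ihz
    | smul c y hy ih =>
      rw [Algebra.smul_def]
      exact TwoSidedIdeal.mul_mem_left _ _ _ ih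
  · intro hx
    have := TwoSidedIdeal.mem_span_iff.mp hx
      (TwoSidedIdeal.mk' (Rsub n : Set (PTAlg n)) (zero_mem _)
        (fun ha hb => add_mem ha hb) (fun ha => neg_mem ha)
        (fun hb => mul_mem_Rsub _ hb) (fun ha => mem_mul_Rsub _ ha))
      (fun y hy => (TwoSidedIdeal.mem_mk' _ _ _ _ _ _ _).mpr (Submodule.subset_span hy))
    exact (TwoSidedIdeal.mem_mk' _ _ _ _ _ _ _).mp this

lemma coeff_eq_zero_of_mem_Rsub {a : PTAlg n} (ha : a ∈ Rsub n) {t : PT n} (ht : Inj t) :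
    coeff a t = 0 := by
  induction ha using Submodule.span_induction with
  | mem y hy =>
    obtain ⟨t', ht', rfl⟩ := hy
    rw [coeff_e, if_neg (fun hc : t' = t => ht' (hc ▸ ht))]
  | zero => rw [coeff_zero]
  | add y z hy hz ihy ihz => rw [coeff_add, ihy, ihz, add_zero]
  | smul c y hy ih => rw [coeff_smul, ih, mul_zero]

lemma one_not_mem_Rsub : (1 : PTAlg n) ∉ Rsub n := by
  intro h
  have h1 := coeff_eq_zero_of_mem_Rsub h (inj_idOn (∅ : Finset (Fin n)))
  rw [coeff_one] at h1
  rw [if_pos (by rw [dom_idOn])] at h1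
  exact one_ne_zero h1
/-- the quotient algebra -/
abbrev Bq (n : ℕ) := (TwoSidedIdeal.span (Sset n)).ringCon.Quotient

/-- the quotient map -/
noncomputable def πq (n : ℕ) : PTAlg n →+* Bq n := (TwoSidedIdeal.span (Sset n)).ringCon.mk'

lemma πq_surjective (n : ℕ) : Function.Surjective (πq n) := fun x =>
  Quot.inductionOn x fun a => ⟨a, rfl⟩

lemma πq_smul (r : ℂ) (a : PTAlg n) : πq n (r • a) = r • πq n a := rfl

noncomputable instance (n : ℕ) : Module ℂ (Bq n) :=
  { (inferInstance : DistribMulAction ℂ (Bq n)) with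
    add_smul := fun r s x => by
      obtain ⟨a, rfl⟩ := πq_surjective n x
      rw [← πq_smul, ← πq_smul, ← πq_smul, add_smul, map_add]
    zero_smul := fun x => by
      obtain ⟨a, rfl⟩ := πq_surjective n x
      rw [← πq_smul, zero_smul, map_zero] }

lemma πq_eq_zero_iff (x : PTAlg n) : πq n x = 0 ↔ x ∈ TwoSidedIdeal.span (Sset n) := by
  rw [show (0 : Bq n) = πq n 0 from (map_zero _).symm]
  exact (RingCon.eq _).trans (TwoSidedIdeal.mem_iff _ _).symm

/-- images of the basis vectors in the quotient -/
noncomputable def Fq (n : ℕ) : PT n → Bq n := fun t => πq n (e t)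

lemma Fq_noninj {t : PT n} (ht : ¬ Inj t) : Fq n t = 0 :=
  (πq_eq_zero_iff _).mpr (TwoSidedIdeal.subset_span ⟨t, ht, rfl⟩)

lemma Fq_mul (s t : PT n) :
    Fq n s * Fq n t = if dom s = ran t then Fq n (comp s t) else 0 := by
  show πq n (e s) * πq n (e t) = _
  rw [← map_mul, e_mul_e]
  split_ifs
  · rfl
  · exact map_zero _

lemma one_eq_sum_Fq : (1 : Bq n) = ∑ X : Finset (Fin n), Fq n (idOn X) := by
  have h1 : (1 : PTAlg n) = ∑ X : Finset (Fin n), e (idOn X) := rfl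
  rw [← map_one (πq n), h1, map_sum]
  rfl

lemma span_Fq_top : Submodule.span ℂ (Set.range (Fq n)) = ⊤ := by
  rw [eq_top_iff]
  rintro x -
  obtain ⟨a, rfl⟩ := πq_surjective n x
  rw [repr a, map_sum]
  apply Submodule.sum_mem
  intro t _
  rw [πq_smul]
  exact Submodule.smul_mem _ _ (Submodule.subset_span (Set.mem_range_self t))

instance (n : ℕ) : Nontrivial (Bq n) := by
  refine ⟨1, 0, fun h => ?_⟩
  have h1 : (1 : PTAlg n) ∈ TwoSidedIdeal.span (Sset n) := by
    rw [← πq_eq_zero_iff, map_one]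
    exact h
  exact one_not_mem_Rsub (mem_Rsub_iff_mem_span.mpr h1)
/-! ### Maschke-style averaging: the quotient is semisimple -/

/-- averaging weights -/
noncomputable def wq (t : PT n) : ℂ := (Ninj (dom t) : ℂ)⁻¹

/-- one term of the averaged projection -/
noncomputable def termq (pr : Bq n → Bq n) (v : Bq n) (t : PT n) : Bq n :=
  wq t • (Fq n (invx t) * pr (Fq n t * v))

lemma termq_def (pr : Bq n → Bq n) (v : Bq n) (t : PT n) :
    termq pr v t = wq t • (Fq n (invx t) * pr (Fq n t * v)) := rfl

/-- the averaged projection -/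
noncomputable def gq (pr : Bq n → Bq n) (v : Bq n) : Bq n := ∑ t : PT n, termq pr v t

lemma gq_def (pr : Bq n → Bq n) (v : Bq n) : gq pr v = ∑ t : PT n, termq pr v t := rfl

section MaschkeLemmas

variable {pr : Bq n → Bq n}

lemma termq_noninj (hpr0 : pr 0 = 0) {t : PT n} (ht : ¬ Inj t) (v : Bq n) : termq pr v t = 0 := by
  rw [termq_def, Fq_noninj ht, zero_mul, hpr0, mul_zero, smul_zero]

lemma termq_v_zero (hpr0 : pr 0 = 0) (t : PT n) : termq pr 0 t = 0 := by
  rw [termq_def, mul_zero, hpr0, mul_zero, smul_zero]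

lemma gq_v_zero (hpr0 : pr 0 = 0) : gq pr 0 = 0 := by
  rw [gq_def, Finset.sum_congr rfl fun t _ => termq_v_zero hpr0 t, Finset.sum_const_zero]

lemma gq_add (hadd : ∀ u v, pr (u + v) = pr u + pr v) (u v : Bq n) :
    gq pr (u + v) = gq pr u + gq pr v := by
  rw [gq_def, gq_def, gq_def, ← Finset.sum_add_distrib]
  refine Finset.sum_congr rfl fun t _ => ?_
  rw [termq_def, termq_def, termq_def, mul_add, hadd, mul_add, smul_add]

lemma gq_smul (hsmul : ∀ (c : ℂ) v, pr (c • v) = c • pr v) (c : ℂ) (v : Bq n) :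
    gq pr (c • v) = c • gq pr v := by
  rw [gq_def, gq_def, Finset.smul_sum]
  refine Finset.sum_congr rfl fun t _ => ?_
  rw [termq_def, termq_def, mul_smul_comm, hsmul, mul_smul_comm, smul_comm]

lemma gq_comm_F (hpr0 : pr 0 = 0) (s : PT n) (v : Bq n) : gq pr (Fq n s * v) = Fq n s * gq pr v := by
  by_cases hs : Inj s
  · rw [gq_def]
    rw [← Finset.sum_filter_of_ne (p := fun t : PT n => Inj t ∧ dom t = ran s)
      (fun t _ hne => by
        by_contra hcon
        apply hne
        by_cases hti : Inj t
        · have hd : dom t ≠ ran s := fun h => hcon ⟨hti, h⟩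
          rw [termq_def, ← mul_assoc, Fq_mul, if_neg hd, zero_mul, hpr0, mul_zero, smul_zero]
        · exact termq_noninj hpr0 hti _)]
    rw [Finset.sum_nbij' (i := fun t => comp t s) (j := fun t => comp t (invx s))
      (t := Finset.univ.filter fun t : PT n => Inj t ∧ dom t = dom s)
      (g := fun t' => Fq n s * termq pr v t')
      (hi := fun t htm => by
        obtain ⟨-, hti, htd⟩ := Finset.mem_filter.mp htm
        exact Finset.mem_filter.mpr ⟨Finset.mem_univ _, inj_comp hti hs, by rw [dom_comp htd]⟩)
      (hj := fun t htm => by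
        obtain ⟨-, hti, htd⟩ := Finset.mem_filter.mp htm
        refine Finset.mem_filter.mpr ⟨Finset.mem_univ _, inj_comp hti (inj_invx s), ?_⟩
        rw [dom_comp (by rw [ran_invx hs]; exact htd), dom_invx])
      (left_neg := fun t htm => by
        obtain ⟨-, hti, htd⟩ := Finset.mem_filter.mp htm
        show comp (comp t s) (invx s) = t
        rw [comp_assoc, self_comp_invx, comp_idOn_of_subset (by rw [htd])]
      )
      (right_neg := fun t htm => by
        obtain ⟨-, hti, htd⟩ := Finset.mem_filter.mp htm
        show comp (comp t (invx s)) s = t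
        rw [comp_assoc, invx_comp_self hs, comp_idOn_of_subset (by rw [htd])]
      )
      (h := fun t htm => by
        obtain ⟨-, hti, htd⟩ := Finset.mem_filter.mp htm
        have hts : Inj (comp t s) := inj_comp hti hs
        show termq pr (Fq n s * v) t = Fq n s * termq pr v (comp t s)
        rw [termq_def, termq_def, ← mul_assoc, Fq_mul, if_pos htd]
        rw [mul_smul_comm, ← mul_assoc, Fq_mul,
          if_pos (show dom s = ran (invx (comp t s)) by rw [ran_invx hts, dom_comp htd])]
        rw [comp_invx_comp hs hti htd]
        have hwq : wq (comp t s) = wq t := by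
          rw [wq, wq, dom_comp htd, htd]
          rw [Ninj_eq (card_ran_of_inj hs).symm]
        rw [hwq])]
    rw [Finset.sum_filter_of_ne (fun t _ hne => by
      by_contra hcon
      apply hne
      show Fq n s * termq pr v t = 0
      by_cases hti : Inj t
      · have hd : dom s ≠ ran (invx t) := by rw [ran_invx hti]; exact fun h => hcon ⟨hti, h.symm⟩
        rw [termq_def, mul_smul_comm, ← mul_assoc, Fq_mul, if_neg hd, zero_mul, smul_zero]
      · rw [termq_noninj hpr0 hti, mul_zero])]
    rw [← Finset.mul_sum, gq_def]
  · rw [Fq_noninj hs, zero_mul, zero_mul, gq_v_zero hpr0]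

lemma gq_comm (hpr0 : pr 0 = 0) (hadd : ∀ u v, pr (u + v) = pr u + pr v)
    (hsmul : ∀ (c : ℂ) v, pr (c • v) = c • pr v) (b v : Bq n) :
    gq pr (b * v) = b * gq pr v := by
  let Z : Submodule ℂ (Bq n) :=
    { carrier := {b | gq pr (b * v) = b * gq pr v}
      add_mem' := fun {b₁ b₂} h1 h2 => by
        simp only [Set.mem_setOf_eq] at h1 h2 ⊢
        rw [add_mul, gq_add hadd, h1, h2, add_mul]
      zero_mem' := by
        simp only [Set.mem_setOf_eq]
        rw [zero_mul, gq_v_zero hpr0, zero_mul]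
      smul_mem' := fun c b h => by
        simp only [Set.mem_setOf_eq] at h ⊢
        rw [smul_mul_assoc, gq_smul hsmul, h, smul_mul_assoc] }
  have hle : Submodule.span ℂ (Set.range (Fq n)) ≤ Z :=
    Submodule.span_le.mpr (by rintro x ⟨s, rfl⟩; exact gq_comm_F hpr0 s v)
  exact hle (span_Fq_top ▸ Submodule.mem_top)

lemma gq_mem (p : Submodule (Bq n) (Bq n)) (hpr_mem : ∀ v, pr v ∈ p) (v : Bq n) :
    gq pr v ∈ p := by
  rw [gq_def]
  apply Submodule.sum_mem
  intro t _
  rw [termq_def]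
  refine (Submodule.restrictScalars_mem ℂ p _).mp ?_
  refine Submodule.smul_mem _ _ ?_
  refine (Submodule.restrictScalars_mem ℂ p _).mpr ?_
  rw [← smul_eq_mul]
  exact p.smul_mem _ (hpr_mem _)

lemma gq_proj (hpr0 : pr 0 = 0) (p : Submodule (Bq n) (Bq n)) (hpr_id : ∀ v ∈ p, pr v = v) (v : Bq n)
    (hv : v ∈ p) : gq pr v = v := by
  have h1 : ∀ t : PT n, Inj t → termq pr v t = wq t • (Fq n (idOn (dom t)) * v) := by
    intro t ht
    have hmem : Fq n t * v ∈ p := by rw [← smul_eq_mul]; exact p.smul_mem _ hv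
    rw [termq_def, hpr_id _ hmem, ← mul_assoc, Fq_mul, if_pos (dom_invx t),
      invx_comp_self ht]
  rw [gq_def]
  rw [← Finset.sum_filter_of_ne (p := fun t : PT n => Inj t) (fun t _ hne => by
    by_contra hni; exact hne (termq_noninj hpr0 hni v))]
  rw [Finset.sum_congr rfl fun t htm => h1 t (Finset.mem_filter.mp htm).2]
  rw [← Finset.sum_fiberwise_of_maps_to (g := fun t : PT n => dom t)
    (t := Finset.univ) (fun t _ => Finset.mem_univ _)
    (f := fun t => wq t • (Fq n (idOn (dom t)) * v))]
  have h2 : ∀ X : Finset (Fin n),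
      (∑ t ∈ (Finset.univ.filter fun t : PT n => Inj t).filter (fun t => dom t = X),
        wq t • (Fq n (idOn (dom t)) * v)) = Fq n (idOn X) * v := by
    intro X
    have h3 : ∀ t ∈ (Finset.univ.filter fun t : PT n => Inj t).filter (fun t => dom t = X),
        wq t • (Fq n (idOn (dom t)) * v) = (Ninj X : ℂ)⁻¹ • (Fq n (idOn X) * v) := by
      intro t htm
      have htd : dom t = X := (Finset.mem_filter.mp htm).2
      rw [wq, htd]
    rw [Finset.sum_congr rfl h3, Finset.sum_const]
    rw [Finset.filter_filter]
    have hcard : (Finset.univ.filter fun t : PT n => Inj t ∧ dom t = X).card = Ninj X := rfl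
    rw [hcard, ← Nat.cast_smul_eq_nsmul ℂ, smul_smul,
      mul_inv_cancel₀ (Nat.cast_ne_zero.mpr (Ninj_pos X).ne'), one_smul]
  rw [Finset.sum_congr rfl fun X _ => h2 X, ← Finset.sum_mul, ← one_eq_sum_Fq, one_mul]

end MaschkeLemmas

instance isSemisimpleRing_Bq (n : ℕ) : IsSemisimpleRing (Bq n) := by
  refine (isSemisimpleModule_iff _ _).mpr ⟨?_⟩
  intro p
  obtain ⟨q, hq⟩ := Submodule.exists_isCompl (p.restrictScalars ℂ)
  set π₀ := Submodule.linearProjOfIsCompl _ q hq with hπ₀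
  set pr : Bq n → Bq n := fun v => ↑(π₀ v) with hpr
  have hpr_mem : ∀ v, pr v ∈ p :=
    fun v => (Submodule.restrictScalars_mem ℂ p _).mp (π₀ v).2
  have hpr_id : ∀ v ∈ p, pr v = v := by
    intro v hv
    have h1 : π₀ v = ⟨v, (Submodule.restrictScalars_mem ℂ p v).mpr hv⟩ :=
      Submodule.linearProjOfIsCompl_apply_left hq ⟨v, (Submodule.restrictScalars_mem ℂ p v).mpr hv⟩
    rw [hpr]
    simp only
    rw [h1]
  have hpr_add : ∀ u v, pr (u + v) = pr u + pr v := by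
    intro u v; rw [hpr]; simp only [map_add]; rfl
  have hpr_smul : ∀ (c : ℂ) v, pr (c • v) = c • pr v := by
    intro c v; rw [hpr]; simp only [map_smul]; rfl
  have hpr0 : pr 0 = 0 := by rw [hpr]; simp only [map_zero]; rfl
  let G0 : Bq n →ₗ[Bq n] Bq n :=
    { toFun := gq pr
      map_add' := fun u v => gq_add hpr_add u v
      map_smul' := fun b v => by
        simp only [RingHom.id_apply, smul_eq_mul]
        exact gq_comm hpr0 hpr_add hpr_smul b v }
  refine ⟨LinearMap.ker (LinearMap.codRestrict p G0 (gq_mem p hpr_mem)),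
    LinearMap.isCompl_of_proj ?_⟩
  intro x
  exact Subtype.ext (gq_proj hpr0 p hpr_id x x.2)
/-! ### The Jacobson radical -/

/-- `Rsub` as a left ideal -/
def Rid (n : ℕ) : Ideal (PTAlg n) :=
  { carrier := (Rsub n : Set (PTAlg n))
    add_mem' := fun ha hb => add_mem ha hb
    zero_mem' := zero_mem _
    smul_mem' := fun c x hx => by rw [smul_eq_mul]; exact mul_mem_Rsub c hx }

lemma mem_Rid_iff {x : PTAlg n} : x ∈ Rid n ↔ x ∈ Rsub n := Iff.rfl

lemma R_le_jac {x : PTAlg n} (hx : x ∈ Rsub n) :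
    x ∈ Ideal.jacobson (⊥ : Ideal (PTAlg n)) := by
  rw [Ideal.jacobson]
  refine Submodule.mem_sInf.mpr ?_
  rintro M ⟨-, hM⟩
  by_cases hle : Rid n ≤ M
  · exact hle hx
  · exfalso
    have hsup : M ⊔ Rid n = ⊤ := by
      apply hM.1.2
      exact lt_of_le_of_ne le_sup_left
        (fun h => hle (le_sup_right.trans h.ge))
    obtain ⟨y, hy, z, hz, hyz⟩ :=
      Submodule.mem_sup.mp (hsup ▸ Submodule.mem_top : (1 : PTAlg n) ∈ M ⊔ Rid n)
    have hznil : IsNilpotent z := by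
      refine ⟨n + 1, ?_⟩
      have h1 : z ^ (n + 1) ∈ Rsub n ^ (n + 1) := Submodule.pow_mem_pow (Rsub n) (mem_Rid_iff.mp hz) (n + 1)
      rw [Rpow_eq_bot] at h1
      exact (Submodule.mem_bot _).mp h1
    have hyu : IsUnit y := by
      have hy1 : y = 1 - z := by rw [← hyz, add_sub_cancel_right]
      rw [hy1]
      exact hznil.isUnit_one_sub
    exact hM.ne_top (Ideal.eq_top_of_isUnit_mem M hy hyu)

lemma jac_Bq_eq_bot (n : ℕ) : Ideal.jacobson (⊥ : Ideal (Bq n)) = ⊥ := by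
  by_contra hne
  obtain ⟨C, hC⟩ := ComplementedLattice.exists_isCompl (Ideal.jacobson (⊥ : Ideal (Bq n)))
  have hCne : C ≠ ⊤ := by
    intro h
    rw [h] at hC
    have h1 := hC.inf_eq_bot
    rw [inf_top_eq] at h1
    exact hne h1
  obtain ⟨M, hM, hCM⟩ := Ideal.exists_le_maximal C hCne
  have hJM : Ideal.jacobson (⊥ : Ideal (Bq n)) ≤ M := sInf_le ⟨bot_le, hM⟩
  have htop : (⊤ : Ideal (Bq n)) ≤ M := by
    rw [← hC.sup_eq_top]
    exact sup_le hJM hCM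
  exact hM.ne_top (top_le_iff.mp htop)

lemma jac_le_R {x : PTAlg n} (hx : x ∈ Ideal.jacobson (⊥ : Ideal (PTAlg n))) :
    x ∈ Rsub n := by
  have h1 : πq n x ∈ Ideal.jacobson (⊥ : Ideal (Bq n)) := by
    rw [Ideal.jacobson]
    refine Submodule.mem_sInf.mpr ?_
    rintro M ⟨-, hM⟩
    have hcm : Ideal.IsMaximal (Ideal.comap (πq n) M) :=
      Ideal.comap_isMaximal_of_surjective _ (πq_surjective n) (H := hM)
    have hx2 : x ∈ Ideal.comap (πq n) M :=
      Submodule.mem_sInf.mp hx _ ⟨bot_le, hcm⟩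
    exact Ideal.mem_comap.mp hx2
  rw [jac_Bq_eq_bot] at h1
  exact mem_Rsub_iff_mem_span.mpr ((πq_eq_zero_iff x).mp ((Submodule.mem_bot _).mp h1))
open PT PTAlg in
/-- In the convolution algebra `A_n`, the linear span `R` of
`{e_t : t ∈ PT_n, t not injective}` is a two-sided ideal equal to the Jacobson radical of
`A_n`; equivalently, `R` is a nilpotent two-sided ideal such that `A_n/R` is semisimple. -/
theorem radical_of_convolution_algebra (n : ℕ) :
    ∀ S : Set (PTAlg n), S = {x | ∃ t : PT n, ¬ Inj t ∧ x = e t} →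
    ∀ R : Submodule ℂ (PTAlg n), R = Submodule.span ℂ S →
      (∀ r ∈ R, ∀ a : PTAlg n, a * r ∈ R ∧ r * a ∈ R) ∧
      (∀ x : PTAlg n, x ∈ R ↔ x ∈ Ideal.jacobson (⊥ : Ideal (PTAlg n))) ∧
      (∃ m : ℕ, R ^ m = ⊥) ∧
      (∀ x : PTAlg n, x ∈ R ↔ x ∈ TwoSidedIdeal.span S) ∧
      IsSemisimpleRing (TwoSidedIdeal.span S).ringCon.Quotient := by
  intro S hS R hR
  subst hS; subst hR
  refine ⟨?_, ?_, ?_, ?_, ?_⟩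
  · intro r hr a
    exact ⟨mul_mem_Rsub a hr, mem_mul_Rsub a hr⟩
  · intro x
    exact ⟨fun h => R_le_jac h, fun h => jac_le_R h⟩
  · exact ⟨n + 1, Rpow_eq_bot⟩
  · intro x
    exact mem_Rsub_iff_mem_span
  · exact isSemisimpleRing_Bq n
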